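/- Let λ ∈ M_{m×k}(F_q) with rank(λ) = j, and let 0 ≤ i ≤ k. The number of matrices r ∈ M_{k×k}(F_q) with rank(r) = i and λ·r = 0 equals ∏_{ℓ=0}^{i-1}(q^k − q^ℓ) · [k−j choose i]_q if i ≤ k−j, and equals 0 if i > k−j. -/

import Mathlib

/-- The Gaussian (q-)binomial coefficient, defined via the q-Pascal recursion. -/
def qbinom {R : Type*} [CommSemiring R] (q : R) : ℕ → ℕ → R
  | _, 0 => 1
  | 0, _ + 1 => 0
  | n + 1, k + 1 => qbinom q n k + q ^ (k + 1) * qbinom q n (k + 1)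

section QbinomAlgebra

lemma qbinom_cast (q : ℕ) : ∀ n k : ℕ, ((qbinom q n k : ℕ) : ℤ) = qbinom (q : ℤ) n k
  | _, 0 => by simp [qbinom]
  | 0, k + 1 => by simp [qbinom]
  | n + 1, k + 1 => by
    simp only [qbinom]
    push_cast [qbinom_cast q n k, qbinom_cast q n (k + 1)]
    ring

lemma prod_shift (q : ℤ) (m k : ℕ) :
    ∏ t ∈ Finset.range (k + 1), (q ^ (m + 1) - q ^ t) =
      (q ^ (m + 1) - 1) * q ^ k * ∏ t ∈ Finset.range k, (q ^ m - q ^ t) := by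
  rw [Finset.prod_range_succ']
  have : ∀ t ∈ Finset.range k, q ^ (m + 1) - q ^ (t + 1) = q * (q ^ m - q ^ t) := by
    intro t _; ring
  rw [Finset.prod_congr rfl this, Finset.prod_mul_distrib, Finset.prod_const,
    Finset.card_range, pow_zero]
  ring

lemma qbinom_key (q : ℤ) : ∀ n k : ℕ,
    qbinom q n k * ∏ t ∈ Finset.range k, (q ^ k - q ^ t) =
      ∏ t ∈ Finset.range k, (q ^ n - q ^ t)
  | _, 0 => by simp [qbinom]
  | 0, k + 1 => by
    simp only [qbinom, zero_mul]
    exact (Finset.prod_eq_zero (Finset.mem_range.2 (Nat.succ_pos k)) (by simp)).symm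
  | n + 1, k + 1 => by
    have h1 := qbinom_key q n k
    have h2 := qbinom_key q n (k + 1)
    rw [prod_shift q k k] at h2
    rw [Finset.prod_range_succ] at h2
    rw [prod_shift q k k, prod_shift q n k]
    simp only [qbinom]
    linear_combination ((q ^ (k + 1) - 1) * q ^ k) * h1 + q ^ (k + 1) * h2

lemma qbinom_key_nat (q d i : ℕ) (hq : 1 ≤ q) (hid : i ≤ d) :
    qbinom q d i * ∏ t ∈ Finset.range i, (q ^ i - q ^ t) =
      ∏ t ∈ Finset.range i, (q ^ d - q ^ t) := by
  have cast : ∀ n : ℕ, i ≤ n →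
      ((∏ t ∈ Finset.range i, (q ^ n - q ^ t) : ℕ) : ℤ) =
        ∏ t ∈ Finset.range i, ((q : ℤ) ^ n - (q : ℤ) ^ t) := by
    intro n hn
    rw [Nat.cast_prod]
    refine Finset.prod_congr rfl fun t ht => ?_
    have : q ^ t ≤ q ^ n :=
      Nat.pow_le_pow_right hq ((Finset.mem_range.1 ht).le.trans hn)
    push_cast [Nat.cast_sub this]
    ring
  have key := qbinom_key (q : ℤ) d i
  apply Nat.cast_injective (R := ℤ)
  rw [Nat.cast_mul, qbinom_cast, cast i le_rfl, cast d hid, key]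

end QbinomAlgebra

section Counting

open LinearMap Module Finset

set_option linter.unusedSectionVars false

variable {F : Type*} [Field F] [Fintype F]

lemma surj_iff_rows (i k : ℕ) (A : Matrix (Fin i) (Fin k) F) :
    Function.Surjective A.mulVecLin ↔ LinearIndependent F (fun t : Fin i => A t) := by
  have h1 : A.rank = finrank F (Submodule.span F (Set.range (fun t : Fin i => A t))) := by
    rw [← Matrix.rank_transpose, Matrix.rank_eq_finrank_span_cols, Matrix.col_transpose]
    rfl
  have h2 : A.rank = finrank F (LinearMap.range A.mulVecLin) := rfl
  rw [linearIndependent_iff_card_eq_finrank_span]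
  constructor
  · intro hs
    rw [Set.finrank, ← h1, h2, LinearMap.range_eq_top.2 hs, finrank_top,
      Module.finrank_fintype_fun_eq_card]
  · intro hc
    rw [← LinearMap.range_eq_top]
    apply Submodule.eq_top_of_finrank_eq
    rw [← h2, h1, ← Set.finrank, ← hc, Module.finrank_fintype_fun_eq_card]

lemma card_surj (i k : ℕ) (hik : i ≤ k) :
    Nat.card {π : (Fin k → F) →ₗ[F] (Fin i → F) // Function.Surjective π} =
      ∏ t ∈ Finset.range i, (Fintype.card F ^ k - Fintype.card F ^ t) := by
  have e1 : {π : (Fin k → F) →ₗ[F] (Fin i → F) // Function.Surjective π} ≃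
      {s : Fin i → (Fin k → F) // LinearIndependent F s} := by
    refine Equiv.subtypeEquiv (LinearMap.toMatrix'.toEquiv.trans Matrix.of.symm) ?_
    intro π
    have hπ : (LinearMap.toMatrix' π).mulVecLin = π := by
      rw [← Matrix.toLin'_apply', Matrix.toLin'_toMatrix']
    have h := surj_iff_rows i k (LinearMap.toMatrix' π)
    rw [hπ] at h
    exact h
  rw [Nat.card_congr e1, card_linearIndependent
    (by rwa [Module.finrank_fintype_fun_eq_card, Fintype.card_fin]),
    Module.finrank_fintype_fun_eq_card, Fintype.card_fin]
  exact Fin.prod_univ_eq_prod_range (fun t => Fintype.card F ^ k - Fintype.card F ^ t) i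

/-- transport linear independence along a linear equivalence -/
def linIndepEquiv {M M' : Type*} [AddCommGroup M] [Module F M] [AddCommGroup M'] [Module F M']
    (e : M ≃ₗ[F] M') (n : ℕ) :
    {s : Fin n → M // LinearIndependent F s} ≃ {s : Fin n → M' // LinearIndependent F s} where
  toFun s := ⟨fun t => e (s.1 t), s.2.map' e.toLinearMap e.ker⟩
  invFun s := ⟨fun t => e.symm (s.1 t), s.2.map' e.symm.toLinearMap e.symm.ker⟩
  left_inv s := by ext t; simp
  right_inv s := by ext t; simp

/-- fiber of span over a subspace `U` of dimension `n` -/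
def spanFiberEquiv {M : Type*} [AddCommGroup M] [Module F M] [FiniteDimensional F M] (n : ℕ)
    (U : {U : Submodule F M // finrank F U = n}) :
    {s : {s : Fin n → M // LinearIndependent F s} //
        Submodule.span F (Set.range s.1) = U.1} ≃
      {s : Fin n → U.1 // LinearIndependent F s} where
  toFun s := ⟨fun t => ⟨s.1.1 t, (le_of_eq s.2) (Submodule.subset_span (Set.mem_range_self t))⟩, by
    apply LinearIndependent.of_comp U.1.subtype
    exact s.1.2⟩
  invFun s := ⟨⟨fun t => (s.1 t : M), s.2.map' U.1.subtype (Submodule.ker_subtype U.1)⟩, by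
    have hspan : Submodule.span F (Set.range s.1) = (⊤ : Submodule F U.1) := by
      apply Submodule.eq_top_of_finrank_eq
      rw [finrank_span_eq_card s.2, Fintype.card_fin, U.2]
    have : Set.range (fun t => (s.1 t : M)) = U.1.subtype '' Set.range s.1 := by
      rw [← Set.range_comp]; rfl
    rw [this, ← Submodule.map_span, hspan, Submodule.map_subtype_top]⟩
  left_inv s := by ext t; rfl
  right_inv s := by ext t; rfl

lemma card_subspaces (W : Type*) [AddCommGroup W] [Module F W] [Finite W] (i : ℕ)
    (hi : i ≤ finrank F W) :
    Nat.card {U : Submodule F W // finrank F U = i} =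
      qbinom (Fintype.card F) (finrank F W) i := by
  classical
  have hfin : FiniteDimensional F W := Module.Finite.of_finite
  have h : ∀ s : {s : Fin i → W // LinearIndependent F s},
      finrank F (Submodule.span F (Set.range s.1)) = i := by
    intro s
    rw [finrank_span_eq_card s.2, Fintype.card_fin]
  have E : {s : Fin i → W // LinearIndependent F s} ≃
      ({U : Submodule F W // finrank F U = i} ×
        {s : Fin i → (Fin i → F) // LinearIndependent F s}) := by
    refine ((Equiv.sigmaSubtypeFiberEquiv
      (fun s : {s : Fin i → W // LinearIndependent F s} =>
        Submodule.span F (Set.range s.1)) (fun U => finrank F U = i) h).symm.trans ?_)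
    refine (Equiv.sigmaCongrRight (fun U => ?_)).trans (Equiv.sigmaEquivProd _ _)
    refine (spanFiberEquiv i U).trans (linIndepEquiv ?_ i)
    exact (FiniteDimensional.nonempty_linearEquiv_of_finrank_eq (by
      rw [U.2, Module.finrank_fintype_fun_eq_card, Fintype.card_fin])).some
  have h1 := card_linearIndependent (K := F) (V := W) hi
  rw [Nat.card_congr E, Nat.card_prod, card_linearIndependent (K := F) (V := Fin i → F)
      (by rw [Module.finrank_fintype_fun_eq_card, Fintype.card_fin])] at h1
  rw [Module.finrank_fintype_fun_eq_card, Fintype.card_fin,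
    Fin.prod_univ_eq_prod_range (fun t => Fintype.card F ^ i - Fintype.card F ^ t) i,
    Fin.prod_univ_eq_prod_range
      (fun t => Fintype.card F ^ finrank F W - Fintype.card F ^ t) i] at h1
  have hpos : 0 < ∏ t ∈ Finset.range i, (Fintype.card F ^ i - Fintype.card F ^ t) := by
    apply Finset.prod_pos
    intro t ht
    have : Fintype.card F ^ t < Fintype.card F ^ i :=
      Nat.pow_lt_pow_right Fintype.one_lt_card (Finset.mem_range.1 ht)
    omega
  apply Nat.eq_of_mul_eq_mul_right hpos
  rw [h1, qbinom_key_nat _ _ _ Fintype.card_pos hi]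


/-- transporting surjections along a linear equivalence of codomains -/
def surjCompEquiv {V M M' : Type*} [AddCommGroup V] [Module F V] [AddCommGroup M] [Module F M]
    [AddCommGroup M'] [Module F M'] (e : M ≃ₗ[F] M') :
    {π : V →ₗ[F] M // Function.Surjective π} ≃ {π : V →ₗ[F] M' // Function.Surjective π} where
  toFun π := ⟨e.toLinearMap ∘ₗ π.1, e.surjective.comp π.2⟩
  invFun π := ⟨e.symm.toLinearMap ∘ₗ π.1, e.symm.surjective.comp π.2⟩
  left_inv π := Subtype.ext (by ext x; simp)
  right_inv π := Subtype.ext (by ext x; simp)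

/-- fiber of range over a subspace `U` -/
def rangeFiberEquiv {k : ℕ} (W : Submodule F (Fin k → F)) (i : ℕ)
    (U : {U : Submodule F W // finrank F U = i}) :
    {f : (Fin k → F) →ₗ[F] W // LinearMap.range f = U.1} ≃
      {π : (Fin k → F) →ₗ[F] U.1 // Function.Surjective π} where
  toFun f := ⟨LinearMap.codRestrict U.1 f.1
      (fun x => (le_of_eq f.2) (LinearMap.mem_range_self f.1 x)), by
    intro u
    have hu : (u : W) ∈ LinearMap.range f.1 := by rw [f.2]; exact u.2
    obtain ⟨x, hx⟩ := hu
    exact ⟨x, Subtype.ext hx⟩⟩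
  invFun π := ⟨U.1.subtype ∘ₗ π.1, by
    rw [LinearMap.range_comp, LinearMap.range_eq_top.2 π.2, Submodule.map_subtype_top]⟩
  left_inv f := Subtype.ext (by ext x; rfl)
  right_inv π := Subtype.ext (by ext x; rfl)

set_option synthInstance.maxHeartbeats 1000000 in
set_option maxHeartbeats 1000000 in
lemma card_rank_maps {k : ℕ} (W : Submodule F (Fin k → F)) (i : ℕ) (hi : i ≤ finrank F W) :
    Nat.card {f : (Fin k → F) →ₗ[F] W // finrank F (LinearMap.range f) = i} =
      (∏ t ∈ Finset.range i, (Fintype.card F ^ k - Fintype.card F ^ t)) *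
        qbinom (Fintype.card F) (finrank F W) i := by
  classical
  have hik : i ≤ k := hi.trans (by
    simpa [Module.finrank_fintype_fun_eq_card] using W.finrank_le)
  have E : {f : (Fin k → F) →ₗ[F] W // finrank F (LinearMap.range f) = i} ≃
      ({U : Submodule F W // finrank F U = i} ×
        {π : (Fin k → F) →ₗ[F] (Fin i → F) // Function.Surjective π}) := by
    refine ((Equiv.sigmaSubtypeFiberEquiv
      (fun f : {f : (Fin k → F) →ₗ[F] W // finrank F (LinearMap.range f) = i} =>
        LinearMap.range f.1) (fun U => finrank F U = i) (fun f => f.2)).symm.trans ?_)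
    refine (Equiv.sigmaCongrRight (fun U => ?_)).trans (Equiv.sigmaEquivProd _ _)
    haveI : Module.Free F (U.1 : Type _) := Module.Free.of_divisionRing F U.1
    have e : (U.1 : Type _) ≃ₗ[F] (Fin i → F) :=
      (FiniteDimensional.nonempty_linearEquiv_of_finrank_eq (M := (U.1 : Type _))
        (M' := Fin i → F) (by simp [U.2])).some
    exact (Equiv.subtypeSubtypeEquivSubtype (fun hx => by rw [hx]; exact U.2)).trans
      ((rangeFiberEquiv W i U).trans
      (surjCompEquiv (V := Fin k → F) (M := (U.1 : Type _)) (M' := Fin i → F) e))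
  rw [Nat.card_congr E, Nat.card_prod, card_subspaces _ i hi, card_surj i k hik, mul_comm]

lemma mulVecLin_toMatrix'_eq {a b : ℕ} (g : (Fin a → F) →ₗ[F] (Fin b → F)) :
    (LinearMap.toMatrix' g).mulVecLin = g := by
  rw [← Matrix.toLin'_apply', Matrix.toLin'_toMatrix']

end Counting

set_option synthInstance.maxHeartbeats 1000000 in
set_option maxHeartbeats 1000000 in
/-- Let `λ ∈ M_{m×k}(F_q)` with `rank λ = j` and `0 ≤ i ≤ k`.  The number of
`r ∈ M_{k×k}(F_q)` with `rank r = i` and `λ·r = 0` equals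
`∏_{ℓ=0}^{i-1}(q^k − q^ℓ) · [k−j choose i]_q` if `i ≤ k−j`, and `0` if `i > k−j`. -/
theorem count_rank_annihilators (F : Type*) [Field F] [Fintype F] (k m i j : ℕ)
    (l : Matrix (Fin m) (Fin k) F) (hj : l.rank = j) (hik : i ≤ k) :
    (i ≤ k - j →
      Nat.card {r : Matrix (Fin k) (Fin k) F // r.rank = i ∧ l * r = 0} =
        (∏ t ∈ Finset.range i, ((Fintype.card F) ^ k - (Fintype.card F) ^ t)) *
          qbinom (Fintype.card F) (k - j) i) ∧
    (k - j < i →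
      Nat.card {r : Matrix (Fin k) (Fin k) F // r.rank = i ∧ l * r = 0} = 0) := by
  classical
  open LinearMap Module in
  set W : Submodule F (Fin k → F) := LinearMap.ker l.mulVecLin with hWdef
  have hsum : j + finrank F W = k := by
    have h := LinearMap.finrank_range_add_finrank_ker l.mulVecLin
    rw [Module.finrank_fintype_fun_eq_card, Fintype.card_fin] at h
    rw [← hj]
    exact h
  have hW : finrank F W = k - j := by omega
  constructor
  · intro hle
    have hmem : ∀ r : {r : Matrix (Fin k) (Fin k) F // r.rank = i ∧ l * r = 0},
        ∀ x, r.1.mulVecLin x ∈ W := by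
      intro r x
      rw [hWdef, LinearMap.mem_ker]
      have h0 : l.mulVecLin ∘ₗ r.1.mulVecLin = 0 := by
        rw [← Matrix.mulVecLin_mul, r.2.2, Matrix.mulVecLin_zero]
      exact DFunLike.congr_fun h0 x
    have hinj : Function.Injective
        (Matrix.mulVecLin : Matrix (Fin m) (Fin k) F → _) := by
      intro M N h
      apply Matrix.toLin'.injective
      rwa [Matrix.toLin'_apply', Matrix.toLin'_apply']
    have E : {r : Matrix (Fin k) (Fin k) F // r.rank = i ∧ l * r = 0} ≃
        {f : (Fin k → F) →ₗ[F] W // finrank F (LinearMap.range f) = i} :=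
      { toFun := fun r => ⟨LinearMap.codRestrict W r.1.mulVecLin (hmem r), by
          have hmap : Submodule.map W.subtype
              (LinearMap.range (LinearMap.codRestrict W r.1.mulVecLin (hmem r))) =
                LinearMap.range r.1.mulVecLin := by
            rw [← LinearMap.range_comp, LinearMap.subtype_comp_codRestrict]
          have h2 := Submodule.finrank_map_subtype_eq W
            (LinearMap.range (LinearMap.codRestrict W r.1.mulVecLin (hmem r)))
          rw [hmap] at h2
          rw [← h2]
          exact r.2.1⟩
        invFun := fun f => ⟨LinearMap.toMatrix' (W.subtype ∘ₗ f.1), by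
          constructor
          · show finrank F (LinearMap.range
              (LinearMap.toMatrix' (W.subtype ∘ₗ f.1)).mulVecLin) = i
            rw [mulVecLin_toMatrix'_eq, LinearMap.range_comp,
              Submodule.finrank_map_subtype_eq]
            exact f.2
          · apply hinj
            rw [Matrix.mulVecLin_mul, mulVecLin_toMatrix'_eq, Matrix.mulVecLin_zero]
            refine LinearMap.ext fun x => ?_
            exact LinearMap.mem_ker.mp (f.1 x).2⟩
        left_inv := fun r => Subtype.ext (by
          show LinearMap.toMatrix'
            (W.subtype ∘ₗ LinearMap.codRestrict W r.1.mulVecLin (hmem r)) = r.1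
          rw [LinearMap.subtype_comp_codRestrict, ← Matrix.toLin'_apply',
            LinearMap.toMatrix'_toLin'])
        right_inv := fun f => Subtype.ext (by
          refine LinearMap.ext fun x => Subtype.ext ?_
          show (LinearMap.toMatrix' (W.subtype ∘ₗ f.1)).mulVecLin x = ((f.1 x : W) : _)
          rw [mulVecLin_toMatrix'_eq]
          rfl) }
    rw [Nat.card_congr E, card_rank_maps W i (by rw [hW]; exact hle), hW]
  · intro hlt
    have hempty : IsEmpty {r : Matrix (Fin k) (Fin k) F // r.rank = i ∧ l * r = 0} := by
      refine ⟨?_⟩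
      rintro ⟨r, hr, hlr⟩
      have hle2 : LinearMap.range r.mulVecLin ≤ W :=
        LinearMap.range_le_ker_iff.2 (by
          rw [← Matrix.mulVecLin_mul, hlr, Matrix.mulVecLin_zero])
      have h3 := Submodule.finrank_mono hle2
      have h4 : finrank F (LinearMap.range r.mulVecLin) = i := hr
      omega
    rw [Nat.card_of_isEmpty]
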